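/- (Corollary 3.1.) In the setting of Theorem 3.1 (with P{ d_W(P*, P̂_N) > r_N } ≤ β_N and (x̂_N, k̂_N) a.s. RS-feasible for τ_ε), with probability at least 1 − β_N, both J* and E_{P*}[h(x̂_N,ξ)] lie in the interval [ −L·r_N + τ_ε/(1+ε), L·r_N + τ_ε ]. In particular, the upper endpoint involves only the Lipschitz constant L and not k̂_N. -/

import Mathlib

open MeasureTheory

noncomputable section

abbrev Vec (m : ℕ) := EuclideanSpace ℝ (Fin m)

/-- A coupling of two Borel probability measures on `Vec m`. -/
def IsCoupling {m : ℕ} (γ : Measure (Vec m × Vec m)) (P Q : Measure (Vec m)) : Prop :=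
  IsProbabilityMeasure γ ∧ γ.map Prod.fst = P ∧ γ.map Prod.snd = Q

/-- Type-1 Wasserstein distance: infimum of `∫ ‖ξ₁ - ξ₂‖₂ dγ` over couplings `γ`. -/
noncomputable def wDist {m : ℕ} (P Q : Measure (Vec m)) : ℝ :=
  sInf {c : ℝ | ∃ γ : Measure (Vec m × Vec m), IsCoupling γ P Q ∧ c = ∫ p, ‖p.1 - p.2‖ ∂γ}

/-- `(x, k)` is RS-feasible for reference value `τ` with respect to `Phat`. -/
def RSFeasible {m : ℕ} {X : Type*} (h : X → Vec m → ℝ)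
    (Phat : Measure (Vec m)) (τ : ℝ) (x : X) (k : ℝ) : Prop :=
  0 ≤ k ∧ ∀ P : Measure (Vec m), IsProbabilityMeasure P →
    Integrable (fun ξ => ‖ξ‖) P → (∫ ξ, h x ξ ∂P) - τ ≤ k * wDist P Phat

/-- Empirical measure `(1/N) ∑ δ_{x i}`. -/
noncomputable def empMeas {m N : ℕ} (xs : Fin N → Vec m) : Measure (Vec m) :=
  (N : ENNReal)⁻¹ • ∑ i : Fin N, Measure.dirac (xs i)


section aux
variable {m : ℕ}

lemma couplingSet_nonempty (P Q : Measure (Vec m)) [IsProbabilityMeasure P]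
    [IsProbabilityMeasure Q] :
    {c : ℝ | ∃ γ : Measure (Vec m × Vec m), IsCoupling γ P Q ∧ c = ∫ p, ‖p.1 - p.2‖ ∂γ}.Nonempty := by
  refine ⟨_, P.prod Q, ⟨inferInstance, ?_, ?_⟩, rfl⟩
  · simp [Measure.map_fst_prod]
  · simp [Measure.map_snd_prod]

lemma couplingSet_nonneg (P Q : Measure (Vec m)) :
    ∀ c ∈ {c : ℝ | ∃ γ : Measure (Vec m × Vec m), IsCoupling γ P Q ∧ c = ∫ p, ‖p.1 - p.2‖ ∂γ},
      0 ≤ c := by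
  rintro c ⟨γ, _, rfl⟩
  exact integral_nonneg fun p => norm_nonneg _

lemma wDist_nonneg (P Q : Measure (Vec m)) : 0 ≤ wDist P Q := by
  by_cases hne : {c : ℝ | ∃ γ : Measure (Vec m × Vec m), IsCoupling γ P Q ∧ c = ∫ p, ‖p.1 - p.2‖ ∂γ}.Nonempty
  · exact le_csInf hne (couplingSet_nonneg P Q)
  · simp [wDist, Set.not_nonempty_iff_eq_empty.mp hne, Real.sInf_empty]

lemma wDist_self (P : Measure (Vec m)) [IsProbabilityMeasure P] : wDist P P = 0 := by
  refine le_antisymm ?_ (wDist_nonneg P P)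
  have hmem : (0 : ℝ) ∈ {c : ℝ | ∃ γ : Measure (Vec m × Vec m), IsCoupling γ P P ∧ c = ∫ p, ‖p.1 - p.2‖ ∂γ} := by
    have hdiag : Measurable (fun ξ : Vec m => (ξ, ξ)) := measurable_id.prodMk measurable_id
    refine ⟨P.map (fun ξ => (ξ, ξ)), ⟨?_, ?_, ?_⟩, ?_⟩
    · exact Measure.isProbabilityMeasure_map hdiag.aemeasurable
    · rw [Measure.map_map measurable_fst hdiag]
      exact Measure.map_id
    · rw [Measure.map_map measurable_snd hdiag]
      exact Measure.map_id
    · rw [integral_map (f := fun p : Vec m × Vec m => ‖p.1 - p.2‖) hdiag.aemeasurable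
        (continuous_fst.sub continuous_snd).norm.aestronglyMeasurable]
      simp
  exact csInf_le ⟨0, couplingSet_nonneg P P⟩ hmem
end aux

section aux2
variable {m : ℕ}

lemma lip_continuous (f : Vec m → ℝ) (L : ℝ) (hL : 0 ≤ L)
    (hLip : ∀ ξ η, |f ξ - f η| ≤ L * ‖ξ - η‖) : Continuous f := by
  have : LipschitzWith L.toNNReal f := by
    apply LipschitzWith.of_dist_le_mul
    intro x y
    rw [Real.dist_eq, Real.coe_toNNReal L hL, dist_eq_norm]
    exact hLip x y
  exact this.continuous

lemma abs_integral_sub_le_mul_wDist (f : Vec m → ℝ) (L : ℝ) (hL : 0 ≤ L)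
    (hLip : ∀ ξ η, |f ξ - f η| ≤ L * ‖ξ - η‖)
    (P Q : Measure (Vec m)) [IsProbabilityMeasure P] [IsProbabilityMeasure Q]
    (hPm : Integrable (fun ξ => ‖ξ‖) P) (hQm : Integrable (fun ξ => ‖ξ‖) Q)
    (hPf : Integrable f P) (hQf : Integrable f Q) :
    |(∫ ξ, f ξ ∂P) - ∫ ξ, f ξ ∂Q| ≤ L * wDist P Q := by
  have hcont : Continuous f := lip_continuous f L hL hLip
  have hkey : ∀ c ∈ {c : ℝ | ∃ γ : Measure (Vec m × Vec m), IsCoupling γ P Q ∧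
      c = ∫ p, ‖p.1 - p.2‖ ∂γ}, |(∫ ξ, f ξ ∂P) - ∫ ξ, f ξ ∂Q| ≤ L * c := by
    rintro c ⟨γ, ⟨hγp, hfst, hsnd⟩, rfl⟩
    haveI := hγp
    have h1 : Integrable (f ∘ Prod.fst) γ := by
      rw [← integrable_map_measure hcont.aestronglyMeasurable measurable_fst.aemeasurable, hfst]
      exact hPf
    have h2 : Integrable (f ∘ Prod.snd) γ := by
      rw [← integrable_map_measure hcont.aestronglyMeasurable measurable_snd.aemeasurable, hsnd]
      exact hQf
    have hn1 : Integrable ((fun ξ : Vec m => ‖ξ‖) ∘ Prod.fst) γ := by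
      rw [← integrable_map_measure continuous_norm.aestronglyMeasurable
        measurable_fst.aemeasurable, hfst]
      exact hPm
    have hn2 : Integrable ((fun ξ : Vec m => ‖ξ‖) ∘ Prod.snd) γ := by
      rw [← integrable_map_measure continuous_norm.aestronglyMeasurable
        measurable_snd.aemeasurable, hsnd]
      exact hQm
    have hn : Integrable (fun p : Vec m × Vec m => ‖p.1 - p.2‖) γ := by
      refine Integrable.mono' (hn1.add hn2)
        (continuous_fst.sub continuous_snd).norm.aestronglyMeasurable ?_
      filter_upwards with p
      simpa [Function.comp] using norm_sub_le p.1 p.2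
    have e1 : ∫ p : Vec m × Vec m, f p.1 ∂γ = ∫ ξ, f ξ ∂P := by
      rw [← hfst, integral_map measurable_fst.aemeasurable hcont.aestronglyMeasurable]
    have e2 : ∫ p : Vec m × Vec m, f p.2 ∂γ = ∫ ξ, f ξ ∂Q := by
      rw [← hsnd, integral_map measurable_snd.aemeasurable hcont.aestronglyMeasurable]
    have h1' : Integrable (fun p : Vec m × Vec m => f p.1) γ := h1
    have h2' : Integrable (fun p : Vec m × Vec m => f p.2) γ := h2
    have step : |∫ p : Vec m × Vec m, (f p.1 - f p.2) ∂γ| ≤ L * ∫ p, ‖p.1 - p.2‖ ∂γ := by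
      calc |∫ p : Vec m × Vec m, (f p.1 - f p.2) ∂γ|
          ≤ ∫ p : Vec m × Vec m, |f p.1 - f p.2| ∂γ := by
            simpa [Real.norm_eq_abs] using
              norm_integral_le_integral_norm (μ := γ) (fun p : Vec m × Vec m => f p.1 - f p.2)
        _ ≤ L * ∫ p, ‖p.1 - p.2‖ ∂γ := by
            rw [← integral_const_mul]
            exact integral_mono (h1'.sub h2').abs (hn.const_mul L) fun p => hLip _ _
    rwa [integral_sub h1' h2', e1, e2] at step
  rcases eq_or_lt_of_le hL with hL0 | hL0
  · obtain ⟨c, hc⟩ := couplingSet_nonempty P Q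
    have := hkey c hc
    rw [← hL0] at this ⊢
    simpa using this
  · have hdiv : |(∫ ξ, f ξ ∂P) - ∫ ξ, f ξ ∂Q| / L ≤ wDist P Q := by
      refine le_csInf (couplingSet_nonempty P Q) fun c hc => ?_
      rw [div_le_iff₀ hL0]
      calc |(∫ ξ, f ξ ∂P) - ∫ ξ, f ξ ∂Q| ≤ L * c := hkey c hc
        _ = c * L := mul_comm _ _
    calc |(∫ ξ, f ξ ∂P) - ∫ ξ, f ξ ∂Q|
        = |(∫ ξ, f ξ ∂P) - ∫ ξ, f ξ ∂Q| / L * L := by field_simp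
      _ ≤ wDist P Q * L := mul_le_mul_of_nonneg_right hdiv hL
      _ = L * wDist P Q := mul_comm _ _

lemma empMeas_isProb {N : ℕ} (hN : 0 < N) (xs : Fin N → Vec m) :
    IsProbabilityMeasure (empMeas xs) := by
  constructor
  rw [empMeas, Measure.smul_apply, Measure.finset_sum_apply]
  simp only [Measure.dirac_apply_of_mem (Set.mem_univ _), Finset.sum_const, Finset.card_univ,
    Fintype.card_fin, nsmul_eq_mul, mul_one, smul_eq_mul]
  exact ENNReal.inv_mul_cancel (by exact_mod_cast hN.ne') (by simp)

lemma empMeas_integrable {N : ℕ} (hN : 0 < N) (xs : Fin N → Vec m) (f : Vec m → ℝ)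
    (hf : StronglyMeasurable f) : Integrable f (empMeas xs) := by
  rw [empMeas]
  refine Integrable.smul_measure ?_ (by simp [hN.ne'])
  rw [integrable_finset_sum_measure]
  intro i _
  exact (integrable_const (f (xs i))).congr (ae_eq_dirac' hf.measurable).symm
end aux2


/-- Corollary 3.1: with probability at least 1 - beta_N, both J* and
E_{P*}[h(xhat_N,.)] lie in [-L r_N + tau_eps/(1+eps), L r_N + tau_eps]; the upper
endpoint involves only the Lipschitz constant L and not khat_N. -/
theorem confidence_interval_lipschitz_endpoints {m N : ℕ} (hN : 0 < N)
    {X : Type*} [Nonempty X]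
    {Ω : Type*} [MeasurableSpace Ω] (μ : Measure Ω) [IsProbabilityMeasure μ]
    (h : X → Vec m → ℝ) (L : ℝ) (hL : 0 ≤ L)
    (hLip : ∀ x ξ η, |h x ξ - h x η| ≤ L * ‖ξ - η‖)
    (hInt : ∀ x (P : Measure (Vec m)), IsProbabilityMeasure P →
      Integrable (fun ξ => ‖ξ‖) P → Integrable (h x) P)
    (Pstar : Measure (Vec m)) [IsProbabilityMeasure Pstar]
    (hPstarmom : Integrable (fun ξ => ‖ξ‖) Pstar)
    -- i.i.d. samples from Pstar
    (ξs : Fin N → Ω → Vec m) (hmeas : ∀ i, Measurable (ξs i))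
    (hindep : ProbabilityTheory.iIndepFun ξs μ)
    (hdist : ∀ i, μ.map (ξs i) = Pstar)
    -- empirical measure
    (Phat : Ω → Measure (Vec m)) (hPhat : ∀ ω, Phat ω = empMeas (fun i => ξs i ω))
    -- reference value
    (ε : ℝ) (hε : 0 < ε)
    (τ : Ω → ℝ) (hτ : ∀ ω, τ ω = (1 + ε) * ⨅ x, ∫ ξ, h x ξ ∂(Phat ω))
    (hfin : ∀ᵐ ω ∂μ, BddBelow (Set.range fun x => ∫ ξ, h x ξ ∂(Phat ω)))
    -- almost surely RS-feasible random pair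
    (xhat : Ω → X) (khat : Ω → ℝ)
    (hfeas : ∀ᵐ ω ∂μ, RSFeasible h (Phat ω) (τ ω) (xhat ω) (khat ω))
    -- concentration of the empirical measure
    (r β : ℝ) (hr : 0 < r) (hβ0 : 0 < β) (hβ1 : β < 1)
    (htail : μ {ω | r < wDist Pstar (Phat ω)} ≤ ENNReal.ofReal β) :
    ENNReal.ofReal (1 - β) ≤
      μ {ω | (⨅ x, ∫ ξ, h x ξ ∂Pstar) ∈
               Set.Icc (-L * r + τ ω / (1 + ε)) (L * r + τ ω) ∧
             (∫ ξ, h (xhat ω) ξ ∂Pstar) ∈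
               Set.Icc (-L * r + τ ω / (1 + ε)) (L * r + τ ω)} := by
  classical
  set T := {ω | (⨅ x, ∫ ξ, h x ξ ∂Pstar) ∈
               Set.Icc (-L * r + τ ω / (1 + ε)) (L * r + τ ω) ∧
             (∫ ξ, h (xhat ω) ξ ∂Pstar) ∈
               Set.Icc (-L * r + τ ω / (1 + ε)) (L * r + τ ω)} with hT
  set G := {ω | wDist Pstar (Phat ω) ≤ r} with hG
  set A := {ω | BddBelow (Set.range fun x => ∫ ξ, h x ξ ∂(Phat ω)) ∧
      RSFeasible h (Phat ω) (τ ω) (xhat ω) (khat ω)} with hA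
  -- pointwise claim: G ∩ A ⊆ T
  have hsub : G ∩ A ⊆ T := by
    rintro ω ⟨hW, hbdd, hk0, hfeP⟩
    haveI : IsProbabilityMeasure (Phat ω) := by
      rw [hPhat ω]; exact empMeas_isProb hN _
    have hmom : Integrable (fun ξ => ‖ξ‖) (Phat ω) := by
      rw [hPhat ω]; exact empMeas_integrable hN _ _ continuous_norm.stronglyMeasurable
    have hcomp : ∀ x, |(∫ ξ, h x ξ ∂Pstar) - ∫ ξ, h x ξ ∂(Phat ω)| ≤ L * r := fun x =>
      (abs_integral_sub_le_mul_wDist (h x) L hL (hLip x) Pstar (Phat ω) hPstarmom hmom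
        (hInt x Pstar inferInstance hPstarmom) (hInt x (Phat ω) inferInstance hmom)).trans
        (mul_le_mul_of_nonneg_left hW hL)
    -- bounded below for Pstar
    obtain ⟨b, hb⟩ := hbdd
    have hbddstar : BddBelow (Set.range fun x => ∫ ξ, h x ξ ∂Pstar) := by
      refine ⟨b - L * r, ?_⟩
      rintro y ⟨x, rfl⟩
      have h1 := hb (Set.mem_range_self (f := fun x => ∫ ξ, h x ξ ∂(Phat ω)) x)
      have h2 := abs_le.mp (hcomp x)
      simp only at h1 ⊢
      linarith [h2.1, h2.2]
    set Jhat := ⨅ x, ∫ ξ, h x ξ ∂(Phat ω) with hJhat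
    have hτdiv : τ ω / (1 + ε) = Jhat := by
      rw [hτ ω]; field_simp; exact hJhat.symm
    have hτJ : τ ω = (1 + ε) * Jhat := hτ ω
    -- feasibility at Phat itself
    have hxhatPhat : ∫ ξ, h (xhat ω) ξ ∂(Phat ω) ≤ τ ω := by
      have := hfeP (Phat ω) inferInstance hmom
      rw [wDist_self, mul_zero] at this
      linarith
    have hJle : Jhat ≤ ∫ ξ, h (xhat ω) ξ ∂(Phat ω) := ciInf_le ⟨b, hb⟩ (xhat ω)
    have hcx := abs_le.mp (hcomp (xhat ω))
    have hJstarle : (⨅ x, ∫ ξ, h x ξ ∂Pstar) ≤ ∫ ξ, h (xhat ω) ξ ∂Pstar :=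
      ciInf_le hbddstar (xhat ω)
    have hJstarge : Jhat - L * r ≤ ⨅ x, ∫ ξ, h x ξ ∂Pstar := by
      refine le_ciInf fun x => ?_
      have h1 : Jhat ≤ ∫ ξ, h x ξ ∂(Phat ω) := ciInf_le ⟨b, hb⟩ x
      have h2 := abs_le.mp (hcomp x)
      linarith [h2.1, h2.2]
    constructor
    · constructor
      · rw [hτdiv]; linarith
      · linarith [hcx.1, hcx.2]
    · constructor
      · rw [hτdiv]; linarith [hcx.1, hcx.2]
      · linarith [hcx.1, hcx.2]
  -- measure of A-complement is zero
  have hAae : μ Aᶜ = 0 := by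
    have := (hfin.and hfeas)
    rwa [MeasureTheory.ae_iff] at this
  -- μ G ≥ 1 - β
  have hGmeas : ENNReal.ofReal (1 - β) ≤ μ G := by
    have hcover : (Set.univ : Set Ω) ⊆ G ∪ {ω | r < wDist Pstar (Phat ω)} := by
      intro ω _
      rcases le_or_gt (wDist Pstar (Phat ω)) r with hle | hlt
      · exact Or.inl hle
      · exact Or.inr hlt
    have h1 : (1 : ENNReal) ≤ μ G + ENNReal.ofReal β := by
      calc (1 : ENNReal) = μ Set.univ := (measure_univ).symm
        _ ≤ μ (G ∪ {ω | r < wDist Pstar (Phat ω)}) := measure_mono hcover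
        _ ≤ μ G + μ {ω | r < wDist Pstar (Phat ω)} := measure_union_le _ _
        _ ≤ μ G + ENNReal.ofReal β := add_le_add_right htail _
    rw [ENNReal.ofReal_sub _ hβ0.le, ENNReal.ofReal_one]
    exact tsub_le_iff_right.mpr h1
  -- combine
  have hGA : μ G ≤ μ (G ∩ A) := by
    calc μ G ≤ μ ((G ∩ A) ∪ Aᶜ) := measure_mono (by
        intro ω hω
        by_cases hA' : ω ∈ A
        · exact Or.inl ⟨hω, hA'⟩
        · exact Or.inr hA')
      _ ≤ μ (G ∩ A) + μ Aᶜ := measure_union_le _ _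
      _ = μ (G ∩ A) := by rw [hAae, add_zero]
  exact hGmeas.trans (hGA.trans (measure_mono hsub))
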